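/- arXiv:2206.06042 — 2 statements merged into one kernel-verified Lean document; each statement's English description precedes it below -/
import Mathlib

section
/- Let (L, σ) be a σ-extension of a σ-field (K, σ) and let a ∈ L. The following are equivalent: (1) a is σ-algebraic over K; (2) the K-vector subspace of L spanned by the elements N_i(a), i ≥ 0, is finite-dimensional; (3) there exists a finite-dimensional K-vector subspace V of L such that 1 ∈ V and a·σ(V) ⊆ V. -/
open Polynomial

variable {K : Type*} [Field K]

/-- `skewN σ i a = σ^{i-1}(a)⋯σ(a)·a`, with `skewN σ 0 a = 1`. -/
def skewN (σ : K →+* K) : ℕ → K → K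
  | 0, _ => 1
  | i + 1, a => σ (skewN σ i a) * a

/-- Right evaluation of a skew polynomial `P = Σ aᵢ Tⁱ` at `a`: `P(a) = Σ aᵢ Nᵢ(a)`. -/
noncomputable def skewEval (σ : K →+* K) (P : Polynomial K) (a : K) : K :=
  ∑ i ∈ P.support, P.coeff i * skewN σ i a

/-- Multiplication in the skew polynomial ring `K[T;σ]` (with `T·a = σ(a)·T`),
using `Polynomial K` as the carrier of coefficient sequences. -/
noncomputable def skewMul (σ : K →+* K) (P Q : Polynomial K) : Polynomial K :=
  ∑ i ∈ P.support, ∑ j ∈ Q.support,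
    Polynomial.C (P.coeff i * (⇑σ)^[i] (Q.coeff j)) * Polynomial.X ^ (i + j)

/-- In a σ-extension `(L, σL)` of the σ-subfield `K`, the element `a` is σ-algebraic
over `K`: it is a right root of some nonzero skew polynomial with coefficients in `K`. -/
def IsSkewAlgebraic {L : Type*} [Field L] (σL : L →+* L) (K : Subfield L) (a : L) : Prop :=
  ∃ P : Polynomial L, P ≠ 0 ∧ (∀ i, P.coeff i ∈ K) ∧ skewEval σL P a = 0

lemma skewN_succ' {L : Type*} [Field L] (σ : L →+* L) (i : ℕ) (a : L) :
    skewN σ (i + 1) a = a * σ (skewN σ i a) := by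
  rw [skewN, mul_comm]

lemma skewEval_eq_sum_range {L : Type*} [Field L] (σ : L →+* L) (P : Polynomial L) (a : L)
    {n : ℕ} (h : ∀ i, n ≤ i → P.coeff i = 0) :
    skewEval σ P a = ∑ i ∈ Finset.range n, P.coeff i * skewN σ i a := by
  rw [skewEval]
  refine Finset.sum_subset ?_ ?_
  · intro i hi
    rw [Finset.mem_range]
    by_contra hh
    exact Polynomial.mem_support_iff.mp hi (h i (by omega))
  · intro i _ hi
    rw [Polynomial.notMem_support_iff.mp hi, zero_mul]

lemma mul_sigma_mem_span {L : Type*} [Field L] (σL : L →+* L) (K : Subfield L)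
    (hK : ∀ x ∈ K, σL x ∈ K) (a : L) (S : Set L) {x : L}
    (hx : x ∈ Submodule.span K S) :
    a * σL x ∈ Submodule.span K ((fun s => a * σL s) '' S) := by
  induction hx using Submodule.span_induction with
  | mem y hy => exact Submodule.subset_span ⟨y, hy, rfl⟩
  | zero => simp only [map_zero, mul_zero]; exact Submodule.zero_mem _
  | add y z _ _ hy hz => rw [map_add, mul_add]; exact Submodule.add_mem _ hy hz
  | smul c y _ hy =>
      have h1 : a * σL (c • y) = (⟨σL c, hK c c.2⟩ : K) • (a * σL y) := by
        show a * σL ((c : L) * y) = σL (c : L) * (a * σL y)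
        rw [map_mul]; ring
      rw [h1]
      exact Submodule.smul_mem _ _ hy

/-- Criterion for σ-algebraicity: `a` is σ-algebraic over `K` iff the `K`-span of the
`Nᵢ(a)` is finite-dimensional, iff some finite-dimensional `K`-subspace `V` of `L`
contains `1` and satisfies `a·σ(V) ⊆ V`. -/
theorem stmt_5 {L : Type*} [Field L] (σL : L →+* L) (K : Subfield L)
    (hK : ∀ x ∈ K, σL x ∈ K) (a : L) :
    List.TFAE [
      IsSkewAlgebraic σL K a,
      FiniteDimensional K (Submodule.span K (Set.range fun i : ℕ => skewN σL i a)),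
      ∃ V : Submodule K L, FiniteDimensional K V ∧ (1 : L) ∈ V ∧
        ∀ v ∈ V, a * σL v ∈ V] := by
  tfae_have 1 → 2 := by
    rintro ⟨P, hP0, hPK, hPa⟩
    set n := P.natDegree with hn
    set S : Set L := (fun i : ℕ => skewN σL i a) '' Set.Iio n with hS
    set M : Submodule K L := Submodule.span K S with hM
    have hMfin : FiniteDimensional K M :=
      FiniteDimensional.span_of_finite K ((Set.finite_Iio n).image _)
    have hlead : P.coeff n ≠ 0 := by
      rw [hn]; show P.leadingCoeff ≠ 0
      exact Polynomial.leadingCoeff_ne_zero.mpr hP0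
    have hnpos : 0 < n := by
      rcases Nat.eq_zero_or_pos n with h0 | h
      · exfalso
        have hkey := skewEval_eq_sum_range σL P a (n := 1)
          (fun i hi => Polynomial.coeff_eq_zero_of_natDegree_lt (by omega))
        rw [hPa] at hkey
        simp [skewN] at hkey
        exact hlead (h0 ▸ hkey.symm)
      · exact h
    have key : ∑ i ∈ Finset.range (n + 1), P.coeff i * skewN σL i a = 0 := by
      rw [← skewEval_eq_sum_range σL P a
        (fun i hi => Polynomial.coeff_eq_zero_of_natDegree_lt (by omega)), hPa]
    rw [Finset.sum_range_succ] at key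
    have e2 : skewN σL n a
        = ∑ i ∈ Finset.range n, (-((P.coeff n)⁻¹ * P.coeff i)) * skewN σL i a := by
      have e1 : P.coeff n * skewN σL n a
          = -∑ i ∈ Finset.range n, P.coeff i * skewN σL i a :=
        eq_neg_of_add_eq_zero_right key
      have e3 := congrArg (fun x => (P.coeff n)⁻¹ * x) e1
      simp only [inv_mul_cancel_left₀ hlead] at e3
      rw [e3, mul_neg, Finset.mul_sum, ← Finset.sum_neg_distrib]
      exact Finset.sum_congr rfl fun i _ => by ring
    have hn_mem : skewN σL n a ∈ M := by
      rw [e2]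
      refine Submodule.sum_mem _ ?_
      intro i hi
      have hc : -((P.coeff n)⁻¹ * P.coeff i) ∈ K :=
        K.neg_mem (K.mul_mem (K.inv_mem (hPK n)) (hPK i))
      show (⟨-((P.coeff n)⁻¹ * P.coeff i), hc⟩ : K) • skewN σL i a ∈ M
      exact Submodule.smul_mem _ _
        (Submodule.subset_span ⟨i, Finset.mem_range.mp hi, rfl⟩)
    have hall : ∀ m, skewN σL m a ∈ M := by
      intro m
      induction m using Nat.strong_induction_on with
      | _ m ih =>
        rcases lt_trichotomy m n with h | h | h
        · exact Submodule.subset_span ⟨m, h, rfl⟩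
        · rw [h]; exact hn_mem
        · obtain ⟨k, rfl⟩ : ∃ k, m = k + 1 := ⟨m - 1, by omega⟩
          rw [skewN_succ']
          refine Submodule.span_le.mpr ?_ (mul_sigma_mem_span σL K hK a S (ih k (by omega)))
          rintro _ ⟨_, ⟨i, hi, rfl⟩, rfl⟩
          show a * σL (skewN σL i a) ∈ M
          rw [← skewN_succ']
          rcases lt_or_eq_of_le (Nat.succ_le_of_lt hi) with h' | h'
          · exact Submodule.subset_span ⟨i + 1, h', rfl⟩
          · rw [show i + 1 = n from h']; exact hn_mem
    exact Submodule.finiteDimensional_of_le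
      (Submodule.span_le.mpr (by rintro _ ⟨i, rfl⟩; exact hall i))
  tfae_have 2 → 3 := by
    intro h2
    refine ⟨Submodule.span K (Set.range fun i : ℕ => skewN σL i a), h2,
      Submodule.subset_span ⟨0, rfl⟩, ?_⟩
    intro v hv
    refine Submodule.span_le.mpr ?_ (mul_sigma_mem_span σL K hK a _ hv)
    rintro _ ⟨_, ⟨i, rfl⟩, rfl⟩
    show a * σL (skewN σL i a) ∈ _
    rw [← skewN_succ']
    exact Submodule.subset_span ⟨i + 1, rfl⟩
  tfae_have 3 → 1 := by
    rintro ⟨V, hVfin, h1V, hVcl⟩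
    have hmem : ∀ i, skewN σL i a ∈ V := by
      intro i
      induction i with
      | zero => exact h1V
      | succ i ih => rw [skewN_succ']; exact hVcl _ ih
    set d := Module.finrank K V with hd
    have hnli : ¬ LinearIndependent K (fun i : Fin (d + 1) => (⟨skewN σL i a, hmem i⟩ : V)) := by
      intro hli
      have := hli.fintype_card_le_finrank
      simp only [Fintype.card_fin] at this
      omega
    obtain ⟨g, hg0, i₀, hi₀⟩ := Fintype.not_linearIndependent_iff.mp hnli
    set P : Polynomial L := ∑ i : Fin (d + 1), Polynomial.monomial (i : ℕ) ((g i : L)) with hP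
    have hcoeff : ∀ j : ℕ, P.coeff j = if h : j < d + 1 then (g ⟨j, h⟩ : L) else 0 := by
      intro j
      rw [hP, Polynomial.finset_sum_coeff]
      simp only [Polynomial.coeff_monomial]
      split
      · next h =>
          rw [Finset.sum_eq_single (⟨j, h⟩ : Fin (d + 1))]
          · simp
          · intro b _ hb
            rw [if_neg]
            intro hbj
            exact hb (Fin.ext hbj)
          · intro habs; exact absurd (Finset.mem_univ _) habs
      · next h =>
          apply Finset.sum_eq_zero
          intro b _
          rw [if_neg]
          omega
    have hsum : ∑ i : Fin (d + 1), (g i : L) * skewN σL (i : ℕ) a = 0 := by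
      have := congrArg (V.subtype) hg0
      rw [map_sum, map_zero] at this
      simpa [Subfield.smul_def, smul_eq_mul] using this
    refine ⟨P, ?_, ?_, ?_⟩
    · intro h
      apply hi₀
      have := hcoeff i₀
      rw [h, Polynomial.coeff_zero, dif_pos i₀.isLt, Fin.eta] at this
      exact_mod_cast this.symm
    · intro i
      rw [hcoeff]
      split
      · exact (g _).2
      · exact K.zero_mem
    · rw [skewEval_eq_sum_range σL P a (n := d + 1)
        (fun i hi => by rw [hcoeff, dif_neg (by omega)])]
      rw [← Fin.sum_univ_eq_sum_range]
      rw [← hsum]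
      refine Finset.sum_congr rfl fun i _ => ?_
      rw [hcoeff, dif_pos i.isLt, Fin.eta]
  tfae_finish
end

section
/- Let (K, σ) be a σ-field with σ an automorphism of K, σ ≠ id_K. If α : K[T;σ] → K[T;σ] is an anti-automorphism, then: (1) α(K) = K and the restriction α_0 of α to K is a field automorphism of K; (2) there exists a_0 ∈ K, a_0 ≠ 0, with α(T) = a_0·T; (3) σ∘α_0∘σ = α_0. Conversely, if α_0 : K → K is a field automorphism satisfying σ∘α_0∘σ = α_0, then for every nonzero a_0 ∈ K there exists a unique anti-automorphism α of K[T;σ] with α(T) = a_0·T whose restriction to K is α_0. -/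
open Polynomial

variable {K : Type*} [Field K]

/-- `α` is an anti-automorphism of the skew polynomial ring `K[T;σ]`: a bijective additive
map with `α(1) = 1` and `α(P·Q) = α(Q)·α(P)`. -/
def IsSkewAntiAuto (σ : K →+* K) (α : Polynomial K → Polynomial K) : Prop :=
  Function.Bijective α ∧ (∀ P Q : Polynomial K, α (P + Q) = α P + α Q) ∧
    α 1 = 1 ∧ ∀ P Q : Polynomial K, α (skewMul σ P Q) = skewMul σ (α Q) (α P)

theorem coeff_skewMul (σ : K →+* K) (P Q : Polynomial K) (n : ℕ) :
    (skewMul σ P Q).coeff n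
      = ∑ p ∈ Finset.HasAntidiagonal.antidiagonal n, P.coeff p.1 * (⇑σ)^[p.1] (Q.coeff p.2) := by
  unfold skewMul
  simp only [Polynomial.finset_sum_coeff, Polynomial.coeff_C_mul, Polynomial.coeff_X_pow,
    mul_ite, mul_one, mul_zero]
  rw [← Finset.sum_product', ← Finset.sum_filter]
  refine Finset.sum_subset ?_ ?_
  · intro p hp
    rw [Finset.mem_filter] at hp
    rw [Finset.HasAntidiagonal.mem_antidiagonal]
    exact hp.2.symm
  · intro p hp hnp
    rw [Finset.HasAntidiagonal.mem_antidiagonal] at hp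
    rw [Finset.mem_filter] at hnp
    push_neg at hnp
    have hps : p ∉ P.support ×ˢ Q.support := fun h => hnp h hp.symm
    rw [Finset.mem_product] at hps
    push_neg at hps
    by_cases h1 : p.1 ∈ P.support
    · have h2 := hps h1
      rw [Polynomial.notMem_support_iff] at h2
      rw [h2, iterate_map_zero, mul_zero]
    · rw [Polynomial.notMem_support_iff] at h1
      rw [h1, zero_mul]

theorem skewMul_monomial (σ : K →+* K) (i j : ℕ) (a b : K) :
    skewMul σ (monomial i a) (monomial j b) = monomial (i + j) (a * (⇑σ)^[i] b) := by
  ext n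
  rw [coeff_skewMul, coeff_monomial]
  by_cases h : i + j = n
  · rw [if_pos h, Finset.sum_eq_single_of_mem (i, j)]
    · simp [coeff_monomial]
    · rw [Finset.HasAntidiagonal.mem_antidiagonal]; exact h
    · intro p hp hne
      rw [Finset.HasAntidiagonal.mem_antidiagonal] at hp
      have hor : p.1 ≠ i ∨ p.2 ≠ j := by
        rcases p with ⟨p1, p2⟩
        rw [ne_eq, Prod.ext_iff, not_and_or] at hne; exact hne
      rcases hor with h' | h'
      · rw [coeff_monomial, if_neg (fun hh => h' hh.symm), zero_mul]
      · rw [show ((monomial j) b).coeff p.2 = 0 from by rw [coeff_monomial, if_neg (fun hh => h' hh.symm)], iterate_map_zero, mul_zero]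
  · rw [if_neg h]
    apply Finset.sum_eq_zero
    intro p hp
    rw [Finset.HasAntidiagonal.mem_antidiagonal] at hp
    have hor : i ≠ p.1 ∨ j ≠ p.2 := by
      by_contra hc
      push_neg at hc
      exact h (by rw [hc.1, hc.2]; exact hp)
    rcases hor with h' | h'
    · rw [coeff_monomial, if_neg h', zero_mul]
    · rw [show ((monomial j) b).coeff p.2 = 0 from by rw [coeff_monomial, if_neg h'], iterate_map_zero, mul_zero]

theorem skewMul_C_left (σ : K →+* K) (a : K) (Q : Polynomial K) :
    skewMul σ (Polynomial.C a) Q = Polynomial.C a * Q := by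
  ext n
  rw [coeff_skewMul, coeff_C_mul, Finset.sum_eq_single_of_mem (0, n)]
  · simp
  · rw [Finset.HasAntidiagonal.mem_antidiagonal]; exact zero_add n
  · intro p hp hne
    rw [Finset.HasAntidiagonal.mem_antidiagonal] at hp
    have h1 : p.1 ≠ 0 := by
      intro h0
      apply hne
      rcases p with ⟨p1, p2⟩
      simp only at h0 hp ⊢
      rw [h0] at hp ⊢
      rw [zero_add] at hp
      rw [hp]
    rw [coeff_C, if_neg h1, zero_mul]

theorem coeff_skewMul_C (σ : K →+* K) (P : Polynomial K) (b : K) (n : ℕ) :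
    (skewMul σ P (Polynomial.C b)).coeff n = P.coeff n * (⇑σ)^[n] b := by
  rw [coeff_skewMul, Finset.sum_eq_single_of_mem (n, 0)]
  · simp
  · rw [Finset.HasAntidiagonal.mem_antidiagonal]; exact add_zero n
  · intro p hp hne
    rw [Finset.HasAntidiagonal.mem_antidiagonal] at hp
    have h2 : p.2 ≠ 0 := by
      intro h0
      apply hne
      rcases p with ⟨p1, p2⟩
      simp only at h0 hp ⊢
      rw [h0] at hp ⊢
      rw [add_zero] at hp
      rw [hp]
    rw [coeff_C, if_neg h2, iterate_map_zero, mul_zero]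

theorem skewMul_add_left (σ : K →+* K) (P P' Q : Polynomial K) :
    skewMul σ (P + P') Q = skewMul σ P Q + skewMul σ P' Q := by
  ext n
  simp only [coeff_add, coeff_skewMul, ← Finset.sum_add_distrib]
  apply Finset.sum_congr rfl
  intro p _
  rw [add_mul]

theorem skewMul_add_right (σ : K →+* K) (P Q Q' : Polynomial K) :
    skewMul σ P (Q + Q') = skewMul σ P Q + skewMul σ P Q' := by
  ext n
  simp only [coeff_add, coeff_skewMul, ← Finset.sum_add_distrib]
  apply Finset.sum_congr rfl
  intro p _
  rw [iterate_map_add, mul_add]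

theorem skewMul_natDegree (σ : K →+* K) (hσ : Function.Injective ⇑σ) {P Q : Polynomial K}
    (hP : P ≠ 0) (hQ : Q ≠ 0) :
    skewMul σ P Q ≠ 0 ∧ (skewMul σ P Q).natDegree = P.natDegree + Q.natDegree := by
  have key : ∀ p : ℕ × ℕ, P.natDegree < p.1 ∨ Q.natDegree < p.2 →
      P.coeff p.1 * (⇑σ)^[p.1] (Q.coeff p.2) = 0 := by
    intro p hp
    rcases hp with h | h
    · rw [coeff_eq_zero_of_natDegree_lt h, zero_mul]
    · rw [coeff_eq_zero_of_natDegree_lt h, iterate_map_zero, mul_zero]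
  have hlead : (skewMul σ P Q).coeff (P.natDegree + Q.natDegree)
      = P.leadingCoeff * (⇑σ)^[P.natDegree] Q.leadingCoeff := by
    rw [coeff_skewMul, Finset.sum_eq_single_of_mem (P.natDegree, Q.natDegree)]
    · rfl
    · rw [Finset.HasAntidiagonal.mem_antidiagonal]
    · intro p hp hne
      rw [Finset.HasAntidiagonal.mem_antidiagonal] at hp
      apply key
      have hor : p.1 ≠ P.natDegree ∨ p.2 ≠ Q.natDegree := by
        rcases p with ⟨p1, p2⟩
        rw [ne_eq, Prod.ext_iff, not_and_or] at hne; exact hne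
      rcases p with ⟨p1, p2⟩
      simp only at hp hor ⊢
      omega
  have hc : (skewMul σ P Q).coeff (P.natDegree + Q.natDegree) ≠ 0 := by
    rw [hlead]
    refine mul_ne_zero (leadingCoeff_ne_zero.mpr hP) ?_
    intro h
    apply leadingCoeff_ne_zero.mpr hQ
    apply Function.Injective.iterate hσ P.natDegree
    rw [h, iterate_map_zero]
  constructor
  · intro h; rw [h] at hc; simp at hc
  · refine le_antisymm ?_ (le_natDegree_of_ne_zero hc)
    rw [natDegree_le_iff_coeff_eq_zero]
    intro N hN
    rw [coeff_skewMul]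
    apply Finset.sum_eq_zero
    intro p hp
    rw [Finset.HasAntidiagonal.mem_antidiagonal] at hp
    apply key
    omega

theorem skewMul_zero_left (σ : K →+* K) (Q : Polynomial K) : skewMul σ 0 Q = 0 := by
  simp [skewMul]

theorem skewMul_X_pow (σ : K →+* K) (i : ℕ) :
    skewMul σ Polynomial.X (Polynomial.X ^ i) = Polynomial.X ^ (i + 1) := by
  have hX : (Polynomial.X : Polynomial K) = monomial 1 1 := by
    rw [← Polynomial.X_pow_eq_monomial 1, pow_one]
  rw [X_pow_eq_monomial i]
  conv_lhs => rw [hX]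
  rw [skewMul_monomial, X_pow_eq_monomial (i + 1), add_comm 1 i]
  congr 1
  simp

theorem skewMul_C_X_pow (σ : K →+* K) (i : ℕ) (c : K) :
    skewMul σ (Polynomial.C c) (Polynomial.X ^ i) = monomial i c := by
  rw [skewMul_C_left, C_mul_X_pow_eq_monomial]

theorem skewMul_X_C (σ : K →+* K) (c : K) :
    skewMul σ Polynomial.X (Polynomial.C c) = Polynomial.C (σ c) * Polynomial.X := by
  ext n
  rw [coeff_skewMul_C, coeff_C_mul, coeff_X]
  by_cases h : 1 = n
  · subst h; simp
  · rw [if_neg h, zero_mul, mul_zero]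

noncomputable def bcoef (σ : K →+* K) (a₀ : K) : ℕ → K
  | 0 => 1
  | i + 1 => bcoef σ a₀ i * (⇑σ)^[i] a₀

theorem bcoef_add (σ : K →+* K) (a₀ : K) (i j : ℕ) :
    bcoef σ a₀ (i + j) = bcoef σ a₀ j * (⇑σ)^[j] (bcoef σ a₀ i) := by
  induction i with
  | zero => simp [bcoef, iterate_map_one]
  | succ i ih =>
    rw [show i + 1 + j = (i + j) + 1 from by omega, bcoef, ih, bcoef, iterate_map_mul,
      show i + j = j + i from by omega, Function.iterate_add_apply]
    ring

theorem bcoef_ne_zero (σ : K →+* K) (hσ : Function.Injective ⇑σ) {a₀ : K} (ha : a₀ ≠ 0)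
    (i : ℕ) : bcoef σ a₀ i ≠ 0 := by
  induction i with
  | zero => exact one_ne_zero
  | succ i ih =>
    refine mul_ne_zero ih ?_
    intro h
    apply ha
    apply Function.Injective.iterate hσ i
    rw [h, iterate_map_zero]

theorem conj_iterate (σ : K →+* K) (α₀ : K → K) (h : ∀ x, σ (α₀ (σ x)) = α₀ x) (i : ℕ)
    (x : K) : (⇑σ)^[i] (α₀ ((⇑σ)^[i] x)) = α₀ x := by
  induction i generalizing x with
  | zero => rfl
  | succ i ih =>
    rw [Function.iterate_succ_apply, Function.iterate_succ_apply', h]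
    exact ih x

theorem coeff_support_sum (g : ℕ → K → K) (hg : ∀ n, g n 0 = 0) (P : Polynomial K) (n : ℕ) :
    (∑ i ∈ P.support, monomial i (g i (P.coeff i))).coeff n = g n (P.coeff n) := by
  rw [Polynomial.finset_sum_coeff]
  by_cases hn : n ∈ P.support
  · rw [Finset.sum_eq_single_of_mem n hn]
    · rw [coeff_monomial, if_pos rfl]
    · intro b _ hb
      rw [coeff_monomial, if_neg hb]
  · rw [Finset.sum_eq_zero, Polynomial.notMem_support_iff.mp hn, hg]
    intro b hb
    rw [coeff_monomial]
    exact if_neg (fun (h : b = n) => hn (h ▸ hb))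

noncomputable def amap (σ : K →+* K) (α₀ : K →+* K) (a₀ : K) (P : Polynomial K) :
    Polynomial K :=
  ∑ i ∈ P.support, monomial i (bcoef σ a₀ i * (⇑σ)^[i] (α₀ (P.coeff i)))

theorem coeff_amap (σ : K →+* K) (α₀ : K →+* K) (a₀ : K) (P : Polynomial K) (n : ℕ) :
    (amap σ α₀ a₀ P).coeff n = bcoef σ a₀ n * (⇑σ)^[n] (α₀ (P.coeff n)) := by
  refine coeff_support_sum (fun i c => bcoef σ a₀ i * (⇑σ)^[i] (α₀ c)) (fun m => ?_) P n
  show bcoef σ a₀ m * (⇑σ)^[m] (α₀ 0) = 0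
  rw [map_zero, iterate_map_zero, mul_zero]

theorem amap_add (σ α₀ : K →+* K) (a₀ : K) (P Q : Polynomial K) :
    amap σ α₀ a₀ (P + Q) = amap σ α₀ a₀ P + amap σ α₀ a₀ Q := by
  ext n
  rw [coeff_add, coeff_amap, coeff_amap, coeff_amap, coeff_add, map_add, iterate_map_add,
    mul_add]

theorem amap_C (σ α₀ : K →+* K) (a₀ : K) (c : K) :
    amap σ α₀ a₀ (Polynomial.C c) = Polynomial.C (α₀ c) := by
  ext n
  rw [coeff_amap, coeff_C, coeff_C]
  by_cases h : n = 0
  · subst h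
    simp [bcoef]
  · rw [if_neg h, if_neg h, map_zero, iterate_map_zero, mul_zero]

theorem amap_one (σ α₀ : K →+* K) (a₀ : K) : amap σ α₀ a₀ 1 = 1 := by
  rw [← Polynomial.C_1, amap_C, map_one, Polynomial.C_1]

theorem amap_X (σ α₀ : K →+* K) (a₀ : K) :
    amap σ α₀ a₀ Polynomial.X = Polynomial.C a₀ * Polynomial.X := by
  ext n
  rw [coeff_amap, coeff_C_mul, coeff_X]
  by_cases h : 1 = n
  · subst h
    simp [bcoef]
  · rw [if_neg h, map_zero, iterate_map_zero, mul_zero, mul_zero]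

theorem amap_scalar (σ α₀ : K →+* K) (h : ∀ x, σ (α₀ (σ x)) = α₀ x) (a₀ : K) (i j : ℕ)
    (a b : K) :
    bcoef σ a₀ (i + j) * (⇑σ)^[i + j] (α₀ (a * (⇑σ)^[i] b))
      = bcoef σ a₀ j * (⇑σ)^[j] (α₀ b) * (⇑σ)^[j] (bcoef σ a₀ i * (⇑σ)^[i] (α₀ a)) := by
  rw [bcoef_add, map_mul, iterate_map_mul, iterate_map_mul]
  have h1 : (⇑σ)^[i + j] (α₀ ((⇑σ)^[i] b)) = (⇑σ)^[j] (α₀ b) := by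
    rw [show i + j = j + i from by omega, Function.iterate_add_apply,
      conj_iterate σ α₀ h i b]
  have h2 : (⇑σ)^[i + j] (α₀ a) = (⇑σ)^[j] ((⇑σ)^[i] (α₀ a)) := by
    rw [show i + j = j + i from by omega, Function.iterate_add_apply]
  rw [h1, h2]
  ring

theorem amap_antimul (σ α₀ : K →+* K) (h : ∀ x, σ (α₀ (σ x)) = α₀ x) (a₀ : K)
    (P Q : Polynomial K) :
    amap σ α₀ a₀ (skewMul σ P Q) = skewMul σ (amap σ α₀ a₀ Q) (amap σ α₀ a₀ P) := by
  ext n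
  have hswap : (skewMul σ (amap σ α₀ a₀ Q) (amap σ α₀ a₀ P)).coeff n
      = ∑ p ∈ Finset.HasAntidiagonal.antidiagonal n,
          (amap σ α₀ a₀ Q).coeff p.2 * (⇑σ)^[p.2] ((amap σ α₀ a₀ P).coeff p.1) := by
    rw [coeff_skewMul, ← Finset.Nat.sum_antidiagonal_swap]
    simp only [Prod.fst_swap, Prod.snd_swap]
  rw [hswap, coeff_amap, coeff_skewMul, map_sum, ← RingHom.coe_pow σ n, map_sum,
    Finset.mul_sum]
  refine Finset.sum_congr rfl ?_
  intro p hp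
  rw [Finset.HasAntidiagonal.mem_antidiagonal] at hp
  rw [coeff_amap, coeff_amap, RingHom.coe_pow, ← hp]
  exact amap_scalar σ α₀ h a₀ p.1 p.2 (P.coeff p.1) (Q.coeff p.2)

noncomputable def ginv (σ α₀ : K ≃+* K) (a₀ : K) (Q : Polynomial K) : Polynomial K :=
  ∑ n ∈ Q.support,
    monomial n (α₀.symm ((⇑σ.symm)^[n] ((bcoef σ.toRingHom a₀ n)⁻¹ * Q.coeff n)))

theorem coeff_ginv (σ α₀ : K ≃+* K) (a₀ : K) (Q : Polynomial K) (n : ℕ) :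
    (ginv σ α₀ a₀ Q).coeff n
      = α₀.symm ((⇑σ.symm)^[n] ((bcoef σ.toRingHom a₀ n)⁻¹ * Q.coeff n)) := by
  refine coeff_support_sum
    (fun i c => α₀.symm ((⇑σ.symm)^[i] ((bcoef σ.toRingHom a₀ i)⁻¹ * c))) (fun m => ?_) Q n
  show α₀.symm ((⇑σ.symm)^[m] ((bcoef σ.toRingHom a₀ m)⁻¹ * 0)) = 0
  rw [mul_zero, iterate_map_zero, map_zero]

theorem ginv_amap (σ α₀ : K ≃+* K) {a₀ : K} (ha : a₀ ≠ 0) (P : Polynomial K) :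
    ginv σ α₀ a₀ (amap σ.toRingHom α₀.toRingHom a₀ P) = P := by
  ext n
  rw [coeff_ginv, coeff_amap, ← mul_assoc,
    inv_mul_cancel₀ (bcoef_ne_zero σ.toRingHom σ.injective ha n), one_mul]
  have h1 : (⇑σ.symm)^[n] ((⇑σ.toRingHom)^[n] (α₀.toRingHom (P.coeff n)))
      = α₀.toRingHom (P.coeff n) :=
    Function.LeftInverse.iterate σ.symm_apply_apply n _
  rw [h1]
  exact α₀.symm_apply_apply _

theorem amap_ginv (σ α₀ : K ≃+* K) {a₀ : K} (ha : a₀ ≠ 0) (Q : Polynomial K) :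
    amap σ.toRingHom α₀.toRingHom a₀ (ginv σ α₀ a₀ Q) = Q := by
  ext n
  rw [coeff_amap, coeff_ginv]
  have h0 : α₀.toRingHom (α₀.symm ((⇑σ.symm)^[n] ((bcoef σ.toRingHom a₀ n)⁻¹ * Q.coeff n)))
      = (⇑σ.symm)^[n] ((bcoef σ.toRingHom a₀ n)⁻¹ * Q.coeff n) :=
    α₀.apply_symm_apply _
  rw [h0]
  have h1 : (⇑σ.toRingHom)^[n] ((⇑σ.symm)^[n] ((bcoef σ.toRingHom a₀ n)⁻¹ * Q.coeff n))
      = (bcoef σ.toRingHom a₀ n)⁻¹ * Q.coeff n :=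
    Function.LeftInverse.iterate σ.apply_symm_apply n _
  rw [h1, ← mul_assoc, mul_inv_cancel₀ (bcoef_ne_zero σ.toRingHom σ.injective ha n), one_mul]

theorem anti_unique (σ' : K →+* K) (β γ : Polynomial K → Polynomial K)
    (hβa : ∀ P Q, β (P + Q) = β P + β Q) (hβ1 : β 1 = 1)
    (hβm : ∀ P Q, β (skewMul σ' P Q) = skewMul σ' (β Q) (β P))
    (hγa : ∀ P Q, γ (P + Q) = γ P + γ Q) (hγ1 : γ 1 = 1)
    (hγm : ∀ P Q, γ (skewMul σ' P Q) = skewMul σ' (γ Q) (γ P))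
    (hX : β Polynomial.X = γ Polynomial.X)
    (hC : ∀ c, β (Polynomial.C c) = γ (Polynomial.C c)) : β = γ := by
  have hpow : ∀ i, β (Polynomial.X ^ i) = γ (Polynomial.X ^ i) := by
    intro i
    induction i with
    | zero => rw [pow_zero, hβ1, hγ1]
    | succ i ih => rw [← skewMul_X_pow σ', hβm, hγm, ih, hX]
  have hmon : ∀ i c, β (monomial i c) = γ (monomial i c) := by
    intro i c
    rw [← skewMul_C_X_pow σ', hβm, hγm, hpow, hC]
  funext P
  have hβs : β (∑ i ∈ P.support, monomial i (P.coeff i))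
      = ∑ i ∈ P.support, β (monomial i (P.coeff i)) :=
    map_sum (AddMonoidHom.mk' β hβa) (fun i => monomial i (P.coeff i)) P.support
  have hγs : γ (∑ i ∈ P.support, monomial i (P.coeff i))
      = ∑ i ∈ P.support, γ (monomial i (P.coeff i)) :=
    map_sum (AddMonoidHom.mk' γ hγa) (fun i => monomial i (P.coeff i)) P.support
  have hPdec : P = ∑ i ∈ P.support, monomial i (P.coeff i) := by
    conv_lhs => rw [← Polynomial.sum_monomial_eq P]
    rw [Polynomial.sum_def]
  conv_lhs => rw [hPdec]
  conv_rhs => rw [hPdec]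
  rw [hβs, hγs]
  exact Finset.sum_congr rfl (fun i _ => hmon i _)

theorem skewMul_zero_right (σ : K →+* K) (P : Polynomial K) : skewMul σ P 0 = 0 := by
  simp [skewMul]

theorem poly_decomp (P : Polynomial K) : P = ∑ i ∈ P.support, monomial i (P.coeff i) := by
  conv_lhs => rw [← Polynomial.sum_monomial_eq P]
  rw [Polynomial.sum_def]

theorem skew_forward (σ : K ≃+* K) (hσ : (σ : K → K) ≠ id) (α : Polynomial K → Polynomial K)
    (hα : IsSkewAntiAuto σ.toRingHom α) :
    ∃ α₀ : K ≃+* K, (∀ c : K, α (Polynomial.C c) = Polynomial.C (α₀ c)) ∧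
      (∀ x : K, σ (α₀ (σ x)) = α₀ x) ∧
      ∃ a₀ : K, a₀ ≠ 0 ∧ α Polynomial.X = Polynomial.C a₀ * Polynomial.X := by
  obtain ⟨hbij, hadd, hone, hmul⟩ := hα
  set σ' := σ.toRingHom with hσ'def
  have hσcoe : ⇑σ' = ⇑σ := rfl
  have σinj : Function.Injective ⇑σ' := σ.injective
  have h0 : α 0 = 0 := by
    have h := hadd 0 0
    rw [add_zero] at h
    exact (left_eq_add.mp h)
  set α₀f : K → K := fun c => (α (Polynomial.C c)).coeff 0 with hα₀fdef
  have hzero0 : α₀f 0 = 0 := by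
    show (α (Polynomial.C 0)).coeff 0 = 0
    rw [Polynomial.C_0, h0, coeff_zero]
  have hC : ∀ c, α (Polynomial.C c) = Polynomial.C (α₀f c) := by
    intro c
    by_cases hc : c = 0
    · subst hc
      rw [Polynomial.C_0, h0, hzero0, Polynomial.C_0]
    · have hunit : skewMul σ' (Polynomial.C c⁻¹) (Polynomial.C c) = 1 := by
        rw [skewMul_C_left, ← Polynomial.C_mul, inv_mul_cancel₀ hc, Polynomial.C_1]
      have h1 : skewMul σ' (α (Polynomial.C c)) (α (Polynomial.C c⁻¹)) = 1 := by
        rw [← hmul, hunit, hone]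
      have hne1 : α (Polynomial.C c) ≠ 0 := by
        intro h
        rw [h, skewMul_zero_left] at h1
        exact zero_ne_one h1
      have hne2 : α (Polynomial.C c⁻¹) ≠ 0 := by
        intro h
        rw [h, skewMul_zero_right] at h1
        exact zero_ne_one h1
      have hdeg := (skewMul_natDegree σ' σinj hne1 hne2).2
      rw [h1, natDegree_one] at hdeg
      have hd0 : (α (Polynomial.C c)).natDegree = 0 := by omega
      obtain ⟨x, hx⟩ := natDegree_eq_zero.mp hd0
      show α (Polynomial.C c) = Polynomial.C ((α (Polynomial.C c)).coeff 0)
      rw [← hx, coeff_C_zero]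
  have hadd0 : ∀ c d, α₀f (c + d) = α₀f c + α₀f d := by
    intro c d
    show (α (Polynomial.C (c + d))).coeff 0
      = (α (Polynomial.C c)).coeff 0 + (α (Polynomial.C d)).coeff 0
    rw [Polynomial.C_add, hadd, coeff_add]
  have hone0 : α₀f 1 = 1 := by
    show (α (Polynomial.C 1)).coeff 0 = 1
    rw [Polynomial.C_1, hone, coeff_one_zero]
  have hmul0 : ∀ c d, α₀f (c * d) = α₀f c * α₀f d := by
    intro c d
    have hcalc : Polynomial.C (α₀f (c * d)) = Polynomial.C (α₀f c * α₀f d) := by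
      calc Polynomial.C (α₀f (c * d)) = α (Polynomial.C (c * d)) := (hC _).symm
        _ = α (skewMul σ' (Polynomial.C d) (Polynomial.C c)) := by
            rw [skewMul_C_left, ← Polynomial.C_mul, mul_comm d c]
        _ = skewMul σ' (α (Polynomial.C c)) (α (Polynomial.C d)) := hmul _ _
        _ = Polynomial.C (α₀f c * α₀f d) := by
            rw [hC, hC, skewMul_C_left, ← Polynomial.C_mul]
    exact Polynomial.C_injective hcalc
  have hinj0 : Function.Injective α₀f := by
    intro c d h
    have h1 : α (Polynomial.C c) = α (Polynomial.C d) := by rw [hC, hC, h]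
    exact Polynomial.C_injective (hbij.1 h1)
  have hXne : α Polynomial.X ≠ 0 := by
    intro h
    exact Polynomial.X_ne_zero (hbij.1 (h.trans h0.symm))
  set d := (α Polynomial.X).natDegree with hddef
  have hApow : ∀ i, α (Polynomial.X ^ i) ≠ 0 ∧ (α (Polynomial.X ^ i)).natDegree = i * d := by
    intro i
    induction i with
    | zero =>
      rw [pow_zero, hone]
      exact ⟨one_ne_zero, by rw [natDegree_one, zero_mul]⟩
    | succ i ih =>
      rw [← skewMul_X_pow σ', hmul]
      obtain ⟨hne, hnd⟩ := skewMul_natDegree σ' σinj ih.1 hXne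
      exact ⟨hne, by rw [hnd, ih.2]; ring⟩
  have hrel : ∀ (c : K) (n : ℕ), α₀f c * (α Polynomial.X).coeff n
      = (α Polynomial.X).coeff n * (⇑σ')^[n] (α₀f (σ c)) := by
    intro c n
    have hcomm : skewMul σ' Polynomial.X (Polynomial.C c)
        = skewMul σ' (Polynomial.C (σ' c)) Polynomial.X := by
      rw [skewMul_X_C, skewMul_C_left]
    have h2 : skewMul σ' (α (Polynomial.C c)) (α Polynomial.X)
        = skewMul σ' (α Polynomial.X) (α (Polynomial.C (σ' c))) := by
      rw [← hmul, ← hmul, hcomm]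
    rw [hC, hC, skewMul_C_left] at h2
    have h3 := Polynomial.ext_iff.mp h2 n
    rw [coeff_C_mul, coeff_skewMul_C] at h3
    exact h3
  obtain ⟨c₀, hc₀⟩ : ∃ c, σ c ≠ c := by
    by_contra hcon
    push_neg at hcon
    exact hσ (funext hcon)
  have he0 : (α Polynomial.X).coeff 0 = 0 := by
    by_contra hne
    have h := hrel c₀ 0
    rw [Function.iterate_zero_apply] at h
    rw [mul_comm (α₀f c₀) ((α Polynomial.X).coeff 0)] at h
    have := hinj0 (mul_left_cancel₀ hne h)
    exact hc₀ (this.symm)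
  have hd0 : d ≠ 0 := by
    intro hd
    obtain ⟨e, he⟩ := natDegree_eq_zero.mp hd
    have hene : e ≠ 0 := by
      intro h
      rw [h, Polynomial.C_0] at he
      exact hXne he.symm
    have he' : e = (α Polynomial.X).coeff 0 := by rw [← he, coeff_C_zero]
    rw [← he'] at he0
    exact hene he0
  have hdeg : ∀ P : Polynomial K, P ≠ 0 → α P ≠ 0 ∧ (α P).natDegree = P.natDegree * d := by
    intro P hP
    have hαP : α P = ∑ i ∈ P.support,
        skewMul σ' (α (Polynomial.X ^ i)) (Polynomial.C (α₀f (P.coeff i))) := by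
      conv_lhs => rw [poly_decomp P]
      have hsum : α (∑ i ∈ P.support, monomial i (P.coeff i))
          = ∑ i ∈ P.support, α (monomial i (P.coeff i)) :=
        map_sum (AddMonoidHom.mk' α hadd) (fun i => monomial i (P.coeff i)) P.support
      rw [hsum]
      refine Finset.sum_congr rfl fun i _ => ?_
      rw [← skewMul_C_X_pow σ', hmul, hC]
    have hterm : ∀ i ∈ P.support,
        skewMul σ' (α (Polynomial.X ^ i)) (Polynomial.C (α₀f (P.coeff i))) ≠ 0 ∧
        (skewMul σ' (α (Polynomial.X ^ i)) (Polynomial.C (α₀f (P.coeff i)))).natDegree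
          = i * d := by
      intro i hi
      have hci : P.coeff i ≠ 0 := Polynomial.mem_support_iff.mp hi
      have hC0 : Polynomial.C (α₀f (P.coeff i)) ≠ 0 := by
        rw [Ne, Polynomial.C_eq_zero]
        intro h
        exact hci (hinj0 (h.trans hzero0.symm))
      obtain ⟨hne, hnd⟩ := skewMul_natDegree σ' σinj (hApow i).1 hC0
      exact ⟨hne, by rw [hnd, (hApow i).2, natDegree_C, add_zero]⟩
    have hub : (α P).natDegree ≤ P.natDegree * d := by
      rw [hαP]
      apply natDegree_sum_le_of_forall_le
      intro i hi
      rw [(hterm i hi).2]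
      exact Nat.mul_le_mul_right d (le_natDegree_of_mem_supp i hi)
    have hmem : P.natDegree ∈ P.support := natDegree_mem_support_of_nonzero hP
    have hcoeff : (α P).coeff (P.natDegree * d) ≠ 0 := by
      rw [hαP, Polynomial.finset_sum_coeff, Finset.sum_eq_single_of_mem P.natDegree hmem]
      · rw [← (hterm P.natDegree hmem).2]
        have hl := leadingCoeff_ne_zero.mpr (hterm P.natDegree hmem).1
        rwa [Polynomial.leadingCoeff] at hl
      · intro b hb hbm
        apply coeff_eq_zero_of_natDegree_lt
        rw [(hterm b hb).2]
        have hblt : b < P.natDegree := lt_of_le_of_ne (le_natDegree_of_mem_supp b hb) hbm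
        have hdpos : 0 < d := Nat.pos_of_ne_zero hd0
        exact Nat.mul_lt_mul_of_lt_of_le hblt (le_refl d) hdpos
    constructor
    · intro h
      rw [h, coeff_zero] at hcoeff
      exact hcoeff rfl
    · exact le_antisymm hub (le_natDegree_of_ne_zero hcoeff)
  have hd1 : d = 1 := by
    obtain ⟨P, hP⟩ := hbij.2 Polynomial.X
    have hPne : P ≠ 0 := by
      intro h
      rw [h, h0] at hP
      exact Polynomial.X_ne_zero hP.symm
    have hnd := (hdeg P hPne).2
    rw [hP, natDegree_X] at hnd
    have h2 : d ∣ 1 := ⟨P.natDegree, by rw [hnd]; ring⟩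
    exact Nat.dvd_one.mp h2
  set a₀ := (α Polynomial.X).coeff 1 with ha₀def
  have ha₀ : a₀ ≠ 0 := by
    have hl := leadingCoeff_ne_zero.mpr hXne
    rw [Polynomial.leadingCoeff, ← hddef, hd1] at hl
    exact hl
  have hXval : α Polynomial.X = Polynomial.C a₀ * Polynomial.X := by
    have hdle : (α Polynomial.X).degree ≤ 1 := by
      rw [degree_eq_natDegree hXne, ← hddef, hd1]
      exact le_refl _
    have h := eq_X_add_C_of_degree_le_one hdle
    rw [he0, Polynomial.C_0, add_zero] at h
    exact h
  have hconj : ∀ x, σ (α₀f (σ x)) = α₀f x := by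
    intro x
    have h := hrel x 1
    rw [Function.iterate_one] at h
    rw [mul_comm (α₀f x) ((α Polynomial.X).coeff 1)] at h
    exact (mul_left_cancel₀ ha₀ h).symm
  have hsurj0 : Function.Surjective α₀f := by
    intro y
    rcases eq_or_ne y 0 with rfl | hy
    · exact ⟨0, hzero0⟩
    · obtain ⟨P, hP⟩ := hbij.2 (Polynomial.C y)
      have hPne : P ≠ 0 := by
        intro h
        rw [h, h0] at hP
        exact hy (Polynomial.C_eq_zero.mp hP.symm)
      have hnd := (hdeg P hPne).2
      rw [hP, natDegree_C, hd1, mul_one] at hnd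
      obtain ⟨x, hx⟩ := natDegree_eq_zero.mp hnd.symm
      refine ⟨x, ?_⟩
      have h1 : α (Polynomial.C x) = Polynomial.C y := by rw [hx, hP]
      rw [hC] at h1
      exact Polynomial.C_injective h1
  let α₀hom : K →+* K :=
    { toFun := α₀f, map_one' := hone0, map_mul' := fun x y => hmul0 x y,
      map_zero' := hzero0, map_add' := hadd0 }
  refine ⟨RingEquiv.ofBijective α₀hom ⟨hinj0, hsurj0⟩, ?_, ?_, a₀, ha₀, hXval⟩
  · intro c
    exact hC c
  · intro x
    exact hconj x

/-- Characterization of the anti-automorphisms of `K[T;σ]` for an automorphism `σ ≠ id`: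
every anti-automorphism `α` restricts to a field automorphism `α₀` of `K` satisfying
`σ∘α₀∘σ = α₀` and sends `T` to `a₀·T` for some `a₀ ≠ 0`; conversely, every such pair
`(α₀, a₀)` arises from a unique anti-automorphism. -/
theorem stmt_10 {K : Type*} [Field K] (σ : K ≃+* K) (hσ : (σ : K → K) ≠ id) :
    (∀ α : Polynomial K → Polynomial K, IsSkewAntiAuto σ.toRingHom α →
      ∃ α₀ : K ≃+* K, (∀ c : K, α (Polynomial.C c) = Polynomial.C (α₀ c)) ∧
        (∀ x : K, σ (α₀ (σ x)) = α₀ x) ∧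
        ∃ a₀ : K, a₀ ≠ 0 ∧ α Polynomial.X = Polynomial.C a₀ * Polynomial.X) ∧
    (∀ α₀ : K ≃+* K, (∀ x : K, σ (α₀ (σ x)) = α₀ x) → ∀ a₀ : K, a₀ ≠ 0 →
      ∃! α : Polynomial K → Polynomial K, IsSkewAntiAuto σ.toRingHom α ∧
        α Polynomial.X = Polynomial.C a₀ * Polynomial.X ∧
        ∀ c : K, α (Polynomial.C c) = Polynomial.C (α₀ c)) := by
  constructor
  · intro α hα
    exact skew_forward σ hσ α hα
  · intro α₀ hconj a₀ ha₀
    have hconj' : ∀ x, σ.toRingHom (α₀.toRingHom (σ.toRingHom x)) = α₀.toRingHom x :=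
      fun x => hconj x
    refine ⟨amap σ.toRingHom α₀.toRingHom a₀, ⟨⟨?_, ?_, ?_, ?_⟩, ?_, ?_⟩, ?_⟩
    · exact Function.bijective_iff_has_inverse.mpr
        ⟨ginv σ α₀ a₀, ginv_amap σ α₀ ha₀, amap_ginv σ α₀ ha₀⟩
    · exact amap_add σ.toRingHom α₀.toRingHom a₀
    · exact amap_one σ.toRingHom α₀.toRingHom a₀
    · exact amap_antimul σ.toRingHom α₀.toRingHom hconj' a₀
    · exact amap_X σ.toRingHom α₀.toRingHom a₀
    · intro c
      exact amap_C σ.toRingHom α₀.toRingHom a₀ c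
    · intro β hβ
      obtain ⟨⟨hbij, haddβ, honeβ, hmulβ⟩, hXβ, hCβ⟩ := hβ
      exact anti_unique σ.toRingHom β (amap σ.toRingHom α₀.toRingHom a₀) haddβ honeβ hmulβ
        (amap_add σ.toRingHom α₀.toRingHom a₀) (amap_one σ.toRingHom α₀.toRingHom a₀)
        (amap_antimul σ.toRingHom α₀.toRingHom hconj' a₀)
        (by rw [hXβ, amap_X]) (fun c => by rw [hCβ, amap_C]; rfl)
end
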